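/- Define F_t ∈ ℚ⟦q⟧ recursively by F_0 = 1 and F_{t+1} = (1/24)·E_2(q)·F_t + D(F_t). Then for every nonnegative integer t, 24^t · F_t · ∏_{k≥1}(1−q^k) = Σ_{n∈ℤ} (−1)^n (6n+1)^{2t} q^{n(3n+1)/2} in ℚ⟦q⟧. (Equivalently, Ramanujan's V_{2t}(q) equals 24^t·D^t(η(q))/η(q) for the Dedekind eta function η(q) = q^{1/24}∏_{k≥1}(1−q^k).) -/

import Mathlib

open PowerSeries Finset

noncomputable section

/-- The operator `D = q·d/dq` on `ℚ⟦q⟧`, coefficientwise `aₙ ↦ n·aₙ`. -/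
def Dq (F : ℚ⟦X⟧) : ℚ⟦X⟧ := PowerSeries.mk fun n => (n : ℚ) * coeff n F

/-- `E₂(q) = 1 - 24 Σ_{n≥1} σ₁(n) qⁿ`. -/
def E2 : ℚ⟦X⟧ := PowerSeries.mk fun n => if n = 0 then 1 else -24 * ∑ d ∈ n.divisors, (d : ℚ)

/-- `E₄(q) = 1 + 240 Σ_{n≥1} σ₃(n) qⁿ`. -/
def E4 : ℚ⟦X⟧ := PowerSeries.mk fun n => if n = 0 then 1 else 240 * ∑ d ∈ n.divisors, (d : ℚ) ^ 3

/-- `E₆(q) = 1 - 504 Σ_{n≥1} σ₅(n) qⁿ`. -/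
def E6 : ℚ⟦X⟧ := PowerSeries.mk fun n => if n = 0 then 1 else -504 * ∑ d ∈ n.divisors, (d : ℚ) ^ 5

/-- `∏_{k≥1} (1 - qᵏ)`, defined coefficientwise by truncated finite products
(factors with `k > N` do not affect the `N`-th coefficient). -/
def eulerProd : ℚ⟦X⟧ :=
  PowerSeries.mk fun N => coeff N (∏ k ∈ Finset.Icc 1 N, (1 - X ^ k : ℚ⟦X⟧))

/-- `Σ_{n ∈ ℤ} (-1)ⁿ (6n+1)^{2t} q^{n(3n+1)/2}` (any `n` with `n(3n+1)/2 = N`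
satisfies `|n| ≤ N`). -/
def pentagonalSum (t : ℕ) : ℚ⟦X⟧ := PowerSeries.mk fun N =>
  ∑ n ∈ Finset.Icc (-(N : ℤ)) (N : ℤ),
    if n * (3 * n + 1) = 2 * N then (-1 : ℚ) ^ n * ((6 * n + 1 : ℤ) : ℚ) ^ (2 * t) else 0

/-- `θ₂(q)⁴ = 16 q (Σ_{n≥0} q^{n(n+1)})⁴`. -/
def theta2four : ℚ⟦X⟧ :=
  16 * X * (PowerSeries.mk fun N => ∑ n ∈ Finset.range (N + 1),
    if n * (n + 1) = N then (1 : ℚ) else 0) ^ 4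

/-- `θ₃(q) = 1 + 2 Σ_{n≥1} q^{n²}`. -/
def theta3 : ℚ⟦X⟧ :=
  1 + 2 * PowerSeries.mk fun N => ∑ n ∈ Finset.Icc 1 N, if n ^ 2 = N then (1 : ℚ) else 0

/-- `θ₄(q) = 1 + 2 Σ_{n≥1} (-1)ⁿ q^{n²}`. -/
def theta4 : ℚ⟦X⟧ :=
  1 + 2 * PowerSeries.mk fun N => ∑ n ∈ Finset.Icc 1 N, if n ^ 2 = N then (-1 : ℚ) ^ n else 0

/-- `Θ_{r,s} = θ₂^{4r} θ₃^{4s} + θ₂^{4s} θ₃^{4r}`. -/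
def Theta (r s : ℕ) : ℚ⟦X⟧ :=
  theta2four ^ r * theta3 ^ (4 * s) + theta2four ^ s * theta3 ^ (4 * r)

/-- MacMahon's `C_{2t}(q) = Σ_{0<s₁<⋯<s_t} q^{Σ(2sᵢ-1)} ∏ (1-q^{2sᵢ-1})⁻²`,
defined coefficientwise: tuples with some `sᵢ > N+1` do not affect the `N`-th coefficient. -/
def Cmac (t : ℕ) : ℚ⟦X⟧ := PowerSeries.mk fun N =>
  coeff N (∑ S ∈ (Finset.Icc 1 (N + 1)).powersetCard t,
    ∏ s ∈ S, (X ^ (2 * s - 1) * ((1 - X ^ (2 * s - 1) : ℚ⟦X⟧)⁻¹) ^ 2))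

/-- MacMahon's `U_{2t}(q) = Σ_{0<k₁<⋯<k_t} q^{Σkᵢ} ∏ (1-q^{kᵢ})⁻²`,
defined coefficientwise by truncation. -/
def Umac (t : ℕ) : ℚ⟦X⟧ := PowerSeries.mk fun N =>
  coeff N (∑ S ∈ (Finset.Icc 1 (N + 1)).powersetCard t,
    ∏ k ∈ S, (X ^ k * ((1 - X ^ k : ℚ⟦X⟧)⁻¹) ^ 2))

/-- `U*_{2t}(q) = Σ_{0<k₁≤⋯≤k_t} q^{Σkᵢ} ∏ (1-q^{kᵢ})⁻²`, a sum over multisets of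
size `t`, defined coefficientwise by truncation. -/
def UmacStar (t : ℕ) : ℚ⟦X⟧ := PowerSeries.mk fun N =>
  coeff N (∑ m ∈ (Finset.Icc 1 (N + 1)).sym t,
    ((m : Multiset ℕ).map fun k => X ^ k * ((1 - X ^ k : ℚ⟦X⟧)⁻¹) ^ 2).prod)

/-- `E₂(q²)`, the substitution `q ↦ q²` in `E₂`. -/
def E2sq : ℚ⟦X⟧ := PowerSeries.mk fun n => if 2 ∣ n then coeff (n / 2) E2 else 0

/-- `G₂(q) = 2 E₂(q²) - E₂(q)`. -/
def G2 : ℚ⟦X⟧ := 2 * E2sq - E2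

/-- `F₀ = 1`, `F_{t+1} = (1/24)E₂·F_t + D(F_t)`, encoding `F_t = D^t(η)/η / 24^... `. -/
def Fram : ℕ → ℚ⟦X⟧
  | 0 => 1
  | t + 1 => (1 / 24 : ℚ) • (E2 * Fram t) + Dq (Fram t)

/-- `V_{2t} = 24^t D^t(η)/η`: `24^t · F_t · ∏(1-qᵏ) = Σ_{n∈ℤ} (-1)ⁿ(6n+1)^{2t} q^{n(3n+1)/2}`. -/

lemma coeff_prod_one_sub (N : ℕ) (A : Finset ℕ) :
    coeff N (∏ k ∈ A, (1 - X ^ k : ℚ⟦X⟧)) =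
      ∑ S ∈ A.powerset, if ∑ i ∈ S, i = N then (-1 : ℚ) ^ S.card else 0 := by
  have h1 : ∏ k ∈ A, (1 - X ^ k : ℚ⟦X⟧) = ∏ k ∈ A, (C (R := ℚ) (-1) * X ^ k + 1) := by
    refine Finset.prod_congr rfl fun k _ => ?_
    rw [map_neg, map_one]; ring
  rw [h1, Finset.prod_add, map_sum]
  refine Finset.sum_congr rfl fun S hS => ?_
  rw [Finset.prod_const_one, mul_one, Finset.prod_mul_distrib, Finset.prod_const,
    Finset.prod_pow_eq_pow_sum, ← map_pow, coeff_C_mul, coeff_X_pow]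
  by_cases h : ∑ i ∈ S, i = N
  · rw [if_pos h, if_pos h.symm, mul_one]
  · rw [if_neg h, if_neg (fun hc => h hc.symm), mul_zero]

lemma sum_Icc_helper (a b : ℕ) (h : a ≤ b + 1) :
    (∑ i ∈ Finset.Icc a b, i) * 2 + a * (a - 1) = (b + 1) * b := by
  have h1 : (∑ i ∈ Finset.Ico 0 a, i) + ∑ i ∈ Finset.Ico a (b + 1), i
      = ∑ i ∈ Finset.Ico 0 (b + 1), i := Finset.sum_Ico_consecutive _ (Nat.zero_le a) h
  rw [← Finset.range_eq_Ico] at h1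
  rw [Finset.Ico_add_one_right_eq_Icc] at h1
  rw [← Finset.range_eq_Ico] at h1
  have h2 := Finset.sum_range_id_mul_two a
  have h3 := Finset.sum_range_id_mul_two (b + 1)
  simp only [Nat.add_sub_cancel] at h3
  -- h3 : (∑ i ∈ range (b+1), i) * 2 = (b+1) * b
  nlinarith [h1, h2, h3]

lemma sum_Icc_pent_plus (m : ℕ) : (∑ i ∈ Finset.Icc (m + 1) (2 * m), i) * 2 = m * (3 * m + 1) := by
  have := sum_Icc_helper (m + 1) (2 * m) (by omega)
  simp only [Nat.add_sub_cancel] at this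
  nlinarith [this]

lemma sum_Icc_pent_minus (m : ℕ) (hm : 1 ≤ m) :
    (∑ i ∈ Finset.Icc m (2 * m - 1), i) * 2 = m * (3 * m - 1) := by
  obtain ⟨m', rfl⟩ : ∃ m', m = m' + 1 := ⟨m - 1, by omega⟩
  have h1 : 2 * (m' + 1) - 1 = 2 * m' + 1 := by omega
  have h2 : 3 * (m' + 1) - 1 = 3 * m' + 2 := by omega
  rw [h1, h2]
  have := sum_Icc_helper (m' + 1) (2 * m' + 1) (by omega)
  simp only [Nat.add_sub_cancel] at this
  nlinarith [this]

lemma pent_unique (n₁ n₂ : ℤ) (h : n₁ * (3 * n₁ + 1) = n₂ * (3 * n₂ + 1)) : n₁ = n₂ := by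
  have hf : (n₁ - n₂) * (3 * (n₁ + n₂) + 1) = 0 := by ring_nf; linarith [h]
  rcases mul_eq_zero.mp hf with h1 | h1
  · omega
  · omega

lemma pent_bound (n : ℤ) (N : ℕ) (h : n * (3 * n + 1) = 2 * N) : -(N : ℤ) ≤ n ∧ n ≤ N := by
  have hN : (0 : ℤ) ≤ N := Int.natCast_nonneg N
  constructor <;> nlinarith [sq_nonneg n, sq_nonneg (n + 1), sq_nonneg (n - 1)]

-- ### Franklin involution machinery

def stair (S : Finset ℕ) (M : ℕ) : ℕ :=
  WithTop.untopD 1 (((Finset.Icc 1 M).filter (fun i => M - i ∉ S)).min)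

def isExc (S : Finset ℕ) : Prop :=
  (∃ m, S = Finset.Icc (m + 1) (2 * m)) ∨ (∃ m, 1 ≤ m ∧ S = Finset.Icc m (2 * m - 1))

lemma min'_Icc (a b : ℕ) (h : a ≤ b) (hne : (Finset.Icc a b).Nonempty) :
    (Finset.Icc a b).min' hne = a :=
  le_antisymm (Finset.min'_le _ a (Finset.mem_Icc.mpr ⟨le_refl a, h⟩))
    (Finset.le_min' _ _ _ fun x hx => (Finset.mem_Icc.mp hx).1)

lemma max'_Icc (a b : ℕ) (h : a ≤ b) (hne : (Finset.Icc a b).Nonempty) :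
    (Finset.Icc a b).max' hne = b :=
  le_antisymm (Finset.max'_le _ _ _ fun x hx => (Finset.mem_Icc.mp hx).2)
    (Finset.le_max' _ b (Finset.mem_Icc.mpr ⟨h, le_refl b⟩))

lemma stair_spec (S : Finset ℕ) (hne : S.Nonempty) (h0 : 0 ∉ S) :
    1 ≤ stair S (S.max' hne) ∧ stair S (S.max' hne) ≤ S.max' hne ∧
      S.max' hne - stair S (S.max' hne) ∉ S ∧
      ∀ i, 1 ≤ i → i < stair S (S.max' hne) → S.max' hne - i ∈ S := by
  classical
  set M := S.max' hne with hM
  have hM1 : 1 ≤ M := Nat.one_le_iff_ne_zero.mpr (fun h => h0 (h ▸ S.max'_mem hne))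
  set F := (Finset.Icc 1 M).filter (fun i => M - i ∉ S) with hF
  have hFne : F.Nonempty := by
    refine ⟨M, ?_⟩
    rw [hF, Finset.mem_filter, Finset.mem_Icc]
    exact ⟨⟨hM1, le_refl M⟩, by simpa using h0⟩
  have hstair : stair S M = F.min' hFne := by
    rw [stair, ← hF, ← Finset.coe_min' hFne, WithTop.untopD_coe]
  clear_value F M
  have hrmem : stair S M ∈ F := by rw [hstair]; exact F.min'_mem hFne
  have hrle : ∀ i ∈ F, stair S M ≤ i := by
    intro i hi
    rw [hstair]
    exact F.min'_le i hi
  rw [hF, Finset.mem_filter, Finset.mem_Icc] at hrmem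
  refine ⟨hrmem.1.1, hrmem.1.2, hrmem.2, ?_⟩
  intro i h1 h2
  by_contra hc
  have hiF : i ∈ F := by
    rw [hF, Finset.mem_filter, Finset.mem_Icc]
    exact ⟨⟨h1, by omega⟩, hc⟩
  exact absurd (hrle i hiF) (by omega)

lemma stair_eq (S : Finset ℕ) (hne : S.Nonempty) (h0 : 0 ∉ S) (v : ℕ)
    (h1 : 1 ≤ v) (h2 : v ≤ S.max' hne) (h3 : S.max' hne - v ∉ S)
    (h4 : ∀ i, 1 ≤ i → i < v → S.max' hne - i ∈ S) : stair S (S.max' hne) = v := by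
  obtain ⟨hr1, hrM, hrS, hrst⟩ := stair_spec S hne h0
  rcases lt_trichotomy (stair S (S.max' hne)) v with h | h | h
  · exact absurd (h4 _ hr1 h) hrS
  · exact h
  · exact absurd (hrst v h1 h) h3

lemma stair_subset (S : Finset ℕ) (hne : S.Nonempty) (h0 : 0 ∉ S) :
    ∀ x, S.max' hne - stair S (S.max' hne) < x → x ≤ S.max' hne → x ∈ S := by
  obtain ⟨hr1, hrM, hrS, hrst⟩ := stair_spec S hne h0
  intro x hx1 hx2
  rcases Nat.eq_or_lt_of_le hx2 with h | h
  · rw [h]; exact S.max'_mem hne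
  · have h1 : 1 ≤ S.max' hne - x := by omega
    have h2 : S.max' hne - x < stair S (S.max' hne) := by omega
    have := hrst _ h1 h2
    have hxx : S.max' hne - (S.max' hne - x) = x := by omega
    rwa [hxx] at this

lemma stair_Icc (a b : ℕ) (ha : 1 ≤ a) (hab : a ≤ b) :
    stair (Finset.Icc a b) b = b + 1 - a := by
  have hne : (Finset.Icc a b).Nonempty := Finset.nonempty_Icc.mpr hab
  have h0 : 0 ∉ Finset.Icc a b := by rw [Finset.mem_Icc]; omega
  have hmax : (Finset.Icc a b).max' hne = b := max'_Icc a b hab hne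
  have := stair_eq (Finset.Icc a b) hne h0 (b + 1 - a) (by omega) (by omega)
    (by rw [hmax, Finset.mem_Icc]; omega)
    (by intro i hi1 hi2; rw [hmax, Finset.mem_Icc]; omega)
  rwa [hmax] at this

lemma interval_or (S : Finset ℕ) (hne : S.Nonempty) (h0 : 0 ∉ S) :
    S.min' hne ≤ S.max' hne - stair S (S.max' hne) ∨
      (S = Finset.Icc (S.min' hne) (S.max' hne) ∧
        stair S (S.max' hne) = S.max' hne + 1 - S.min' hne) := by
  obtain ⟨hr1, hrM, hrS, hrst⟩ := stair_spec S hne h0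
  set s := S.min' hne with hs
  set M := S.max' hne with hM
  set r := stair S M with hr
  have hs1 : 1 ≤ s := Nat.one_le_iff_ne_zero.mpr (fun h => h0 (h ▸ S.min'_mem hne))
  have hsM : s ≤ M := Finset.min'_le _ _ (S.max'_mem hne)
  by_cases hcase : s ≤ M - r
  · exact Or.inl hcase
  · right
    have hsub := stair_subset S hne h0
    rw [← hM] at hsub
    rw [← hr] at hsub
    have hSeq : S = Finset.Icc s M := by
      ext x
      rw [Finset.mem_Icc]
      constructor
      · intro hx; exact ⟨S.min'_le x hx, S.le_max' x hx⟩
      · rintro ⟨hx1, hx2⟩; exact hsub x (by omega) hx2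
    refine ⟨hSeq, ?_⟩
    -- r ≥ M + 1 - s since s > M - r; r ≤ M + 1 - s:
    have hle : r ≤ M + 1 - s := by
      by_contra hc
      have h1 : 1 ≤ M + 1 - s := by omega
      have h2 : M + 1 - s < r := by omega
      have := hrst _ h1 h2
      have hxx : M - (M + 1 - s) = s - 1 := by omega
      rw [hxx] at this
      have := S.min'_le _ this
      omega
    omega

def frk (S : Finset ℕ) : Finset ℕ :=
  if h : S.Nonempty then
    if S.min' h ≤ stair S (S.max' h) then
      insert (S.max' h + 1) ((S.erase (S.min' h)).erase (S.max' h + 1 - S.min' h))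
    else
      insert (stair S (S.max' h))
        (insert (S.max' h - stair S (S.max' h)) (S.erase (S.max' h)))
  else S

lemma case1 (S : Finset ℕ) (hne : S.Nonempty) (h0 : 0 ∉ S)
    (hcase : S.min' hne ≤ stair S (S.max' hne))
    (hexc : S ≠ Finset.Icc (S.min' hne) (2 * S.min' hne - 1)) :
    (∑ i ∈ frk S, i) = (∑ i ∈ S, i) ∧ (frk S).card + 1 = S.card ∧ 0 ∉ frk S ∧
      frk (frk S) = S ∧ ¬ isExc (frk S) := by
  obtain ⟨hr1, hrM, hMrS, hst⟩ := stair_spec S hne h0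
  have hsub := stair_subset S hne h0
  have hior := interval_or S hne h0
  set s := S.min' hne with hs
  set M := S.max' hne with hM
  set r := stair S (S.max' hne) with hr
  have hs1 : 1 ≤ s := Nat.one_le_iff_ne_zero.mpr (fun h => h0 (h ▸ S.min'_mem hne))
  have hsM : s ≤ M := Finset.min'_le _ _ (S.max'_mem hne)
  have hsS : s ∈ S := S.min'_mem hne
  have hMS : M ∈ S := S.max'_mem hne
  have hM1 : M + 1 ∉ S := fun h => by have := S.le_max' _ h; omega
  -- 2s ≤ M
  have hM2s : 2 * s ≤ M := by
    rcases hior with h | ⟨hSeq, hreq⟩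
    · omega
    · have : M ≠ 2 * s - 1 := by
        intro hMeq
        exact hexc (by rw [hSeq, hMeq])
      omega
  have hbot : M + 1 - s ∈ S := hsub _ (by omega) (by omega)
  have hsne : s ≠ M + 1 - s := by omega
  -- the image
  set E := (S.erase s).erase (M + 1 - s) with hE
  have hfrk : frk S = insert (M + 1) E := by
    rw [frk, dif_pos hne, if_pos hcase]
  have hbotE : M + 1 - s ∈ S.erase s := Finset.mem_erase.mpr ⟨by omega, hbot⟩
  have hM1E : M + 1 ∉ E := by
    intro h
    exact hM1 (Finset.mem_of_mem_erase (Finset.mem_of_mem_erase h))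
  -- sum
  have hsum : (∑ i ∈ frk S, i) = (∑ i ∈ S, i) := by
    rw [hfrk, Finset.sum_insert hM1E]
    have e1 : (M + 1 - s) + ∑ i ∈ E, i = ∑ i ∈ S.erase s, i := by
      rw [hE]; exact Finset.add_sum_erase _ (fun i => i) hbotE
    have e2 : s + ∑ i ∈ S.erase s, i = ∑ i ∈ S, i := Finset.add_sum_erase _ (fun i => i) hsS
    omega
  -- card
  have hcard2 : 2 ≤ S.card := by
    have : ({s, M + 1 - s} : Finset ℕ) ⊆ S := by
      intro x hx
      rcases Finset.mem_insert.mp hx with rfl | hx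
      · exact hsS
      · rw [Finset.mem_singleton.mp hx]; exact hbot
    calc 2 = ({s, M + 1 - s} : Finset ℕ).card := by
            rw [Finset.card_insert_of_notMem (by simp [hsne]), Finset.card_singleton]
      _ ≤ S.card := Finset.card_le_card this
  have hcard : (frk S).card + 1 = S.card := by
    rw [hfrk, Finset.card_insert_of_notMem hM1E, hE,
      Finset.card_erase_of_mem hbotE, Finset.card_erase_of_mem hsS]
    omega
  have h0T : 0 ∉ frk S := by
    rw [hfrk]
    intro h
    rcases Finset.mem_insert.mp h with h | h
    · omega
    · exact h0 (Finset.mem_of_mem_erase (Finset.mem_of_mem_erase h))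
  -- parameters of the image
  have hTne : (frk S).Nonempty := ⟨M + 1, by rw [hfrk]; exact Finset.mem_insert_self _ _⟩
  have hTsub : ∀ x ∈ frk S, x = M + 1 ∨ (x ∈ S ∧ x ≠ s ∧ x ≠ M + 1 - s) := by
    intro x hx
    rw [hfrk] at hx
    rcases Finset.mem_insert.mp hx with h | h
    · exact Or.inl h
    · rw [hE] at h
      rw [Finset.mem_erase] at h
      rw [Finset.mem_erase] at h
      exact Or.inr ⟨h.2.2, h.2.1, h.1⟩
  have hTmax : (frk S).max' hTne = M + 1 := by
    refine le_antisymm (Finset.max'_le _ _ _ fun x hx => ?_)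
      (Finset.le_max' _ _ (by rw [hfrk]; exact Finset.mem_insert_self _ _))
    rcases hTsub x hx with rfl | ⟨hxS, _, _⟩
    · omega
    · have := S.le_max' x hxS; omega
  have hTmin : ∀ x ∈ frk S, s < x := by
    intro x hx
    rcases hTsub x hx with rfl | ⟨hxS, hxs, _⟩
    · omega
    · have := S.min'_le x hxS; omega
  have hstT : stair (frk S) ((frk S).max' hTne) = s := by
    refine stair_eq (frk S) hTne h0T s hs1 (by rw [hTmax]; omega) ?_ ?_
    · rw [hTmax]
      intro h
      rcases hTsub _ h with h' | ⟨_, _, h'⟩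
      · omega
      · exact h' rfl
    · intro i hi1 hi2
      rw [hTmax]
      have hx1 : M + 1 - i ∈ S := hsub _ (by omega) (by omega)
      rw [hfrk]
      refine Finset.mem_insert_of_mem ?_
      rw [hE, Finset.mem_erase, Finset.mem_erase]
      exact ⟨by omega, by omega, hx1⟩
  have hTminlt : s < (frk S).min' hTne := hTmin _ ((frk S).min'_mem hTne)
  have hback : frk (frk S) = S := by
    rw [frk, dif_pos hTne, if_neg (by rw [hstT]; omega), hstT, hTmax]
    rw [hfrk, Finset.erase_insert hM1E, hE, Finset.insert_erase hbotE,
      Finset.insert_erase hsS]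
  refine ⟨hsum, hcard, h0T, hback, ?_⟩
  obtain ⟨hT1, hT2, hT3, hT4⟩ := stair_spec (frk S) hTne h0T
  rw [hstT, hTmax] at hT3 hT4
  rintro (⟨m, hm⟩ | ⟨m, hm1, hm⟩)
  · -- frk S = Icc (m+1) (2m)
    have hmem1 : M + 1 ∈ Finset.Icc (m + 1) (2 * m) := by
      rw [← hm, hfrk]; exact Finset.mem_insert_self _ _
    rw [Finset.mem_Icc] at hmem1
    have hmax2 : M + 1 = 2 * m := by
      have h3 : 2 * m ∈ frk S := by rw [hm]; exact Finset.mem_Icc.mpr ⟨by omega, le_refl _⟩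
      have h4 := S.le_max' -- dummy
      have h5 : ∀ x ∈ frk S, x ≤ 2 * m := by
        rw [hm]; intro x hx; exact (Finset.mem_Icc.mp hx).2
      have h6 := Finset.le_max' _ _ h3
      rw [hTmax] at h6
      exact le_antisymm (by have := h5 _ (by rw [hfrk]; exact Finset.mem_insert_self _ _); omega) h6
    rw [hm] at hT3
    rw [Finset.mem_Icc] at hT3
    -- s ≥ m
    have hsm : m ≤ s := by omega
    -- s ≤ m : if s ≥ m+1, take i = s - 1 ≥ m ⇒ M+1-i = 2m - s + 1 ≤ m contradiction
    have hsm2 : s ≤ m := by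
      by_contra hc
      have h7 := hT4 (s - 1) (by omega) (by omega)
      rw [hm, Finset.mem_Icc] at h7
      omega
    omega
  · -- frk S = Icc m (2m - 1)
    have hmmem : m ∈ frk S := by
      rw [hm]
      refine Finset.mem_Icc.mpr ⟨le_refl _, ?_⟩
      by_contra hc
      have : Finset.Icc m (2 * m - 1) = ∅ := Finset.Icc_eq_empty (by omega)
      rw [this] at hm
      exact Finset.not_nonempty_empty (hm ▸ hTne)
    have := hTmin m hmmem
    have hmem1 : M + 1 ∈ Finset.Icc m (2 * m - 1) := by
      rw [← hm, hfrk]; exact Finset.mem_insert_self _ _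
    rw [Finset.mem_Icc] at hmem1
    have h2m1 : 2 * m - 1 ∈ frk S := by
      rw [hm]; exact Finset.mem_Icc.mpr ⟨by omega, le_refl _⟩
    have hle2 := Finset.le_max' _ _ h2m1
    rw [hTmax] at hle2
    rw [hm, Finset.mem_Icc] at hT3
    omega

lemma case2 (S : Finset ℕ) (hne : S.Nonempty) (h0 : 0 ∉ S)
    (hcase : ¬ (S.min' hne ≤ stair S (S.max' hne)))
    (hexc : S ≠ Finset.Icc (S.min' hne) (2 * S.min' hne - 2)) :
    (∑ i ∈ frk S, i) = (∑ i ∈ S, i) ∧ (frk S).card = S.card + 1 ∧ 0 ∉ frk S ∧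
      frk (frk S) = S ∧ ¬ isExc (frk S) := by
  obtain ⟨hr1, hrM, hMrS, hst⟩ := stair_spec S hne h0
  have hsub := stair_subset S hne h0
  have hior := interval_or S hne h0
  set s := S.min' hne with hs
  set M := S.max' hne with hM
  set r := stair S (S.max' hne) with hr
  have hs1 : 1 ≤ s := Nat.one_le_iff_ne_zero.mpr (fun h => h0 (h ▸ S.min'_mem hne))
  have hsM : s ≤ M := Finset.min'_le _ _ (S.max'_mem hne)
  have hsS : s ∈ S := S.min'_mem hne
  have hMS : M ∈ S := S.max'_mem hne
  have hrs : r < s := by omega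
  have hsmin : ∀ x ∈ S, s ≤ x := fun x hx => S.min'_le x hx
  have hrMr : r < M - r := by
    rcases hior with h | ⟨hSeq, hreq⟩
    · omega
    · have : M ≠ 2 * s - 2 := by
        intro hMeq
        exact hexc (by rw [hSeq, hMeq])
      omega
  have hrS : r ∉ S := fun h => by have := hsmin r h; omega
  set T := insert r (insert (M - r) (S.erase M)) with hT
  have hfrk : frk S = T := by
    rw [frk, dif_pos hne, if_neg hcase]
  have hMrS' : M - r ∉ S.erase M := fun h => hMrS (Finset.mem_of_mem_erase h)
  have hrIn : r ∉ insert (M - r) (S.erase M) := by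
    intro h
    rcases Finset.mem_insert.mp h with h | h
    · omega
    · exact hrS (Finset.mem_of_mem_erase h)
  have hsum : (∑ i ∈ frk S, i) = (∑ i ∈ S, i) := by
    rw [hfrk, hT, Finset.sum_insert hrIn, Finset.sum_insert hMrS']
    have e2 : M + ∑ i ∈ S.erase M, i = ∑ i ∈ S, i := Finset.add_sum_erase _ (fun i => i) hMS
    omega
  have hcard : (frk S).card = S.card + 1 := by
    rw [hfrk, hT, Finset.card_insert_of_notMem hrIn, Finset.card_insert_of_notMem hMrS',
      Finset.card_erase_of_mem hMS]
    have : 1 ≤ S.card := Finset.card_pos.mpr hne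
    omega
  have h0T : 0 ∉ frk S := by
    rw [hfrk, hT]
    intro h
    rcases Finset.mem_insert.mp h with h | h
    · omega
    · rcases Finset.mem_insert.mp h with h | h
      · omega
      · exact h0 (Finset.mem_of_mem_erase h)
  have hTne : (frk S).Nonempty := ⟨r, by rw [hfrk, hT]; exact Finset.mem_insert_self _ _⟩
  have hrT : r ∈ frk S := by rw [hfrk, hT]; exact Finset.mem_insert_self _ _
  have hTsub : ∀ x ∈ frk S, x = r ∨ x = M - r ∨ (x ∈ S ∧ x ≠ M) := by
    intro x hx
    rw [hfrk, hT] at hx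
    rcases Finset.mem_insert.mp hx with h | h
    · exact Or.inl h
    · rcases Finset.mem_insert.mp h with h | h
      · exact Or.inr (Or.inl h)
      · rw [Finset.mem_erase] at h
        exact Or.inr (Or.inr ⟨h.2, h.1⟩)
  have hM1mem : M - 1 ∈ frk S := by
    rcases Nat.eq_or_lt_of_le hr1 with h | h
    · rw [hfrk, hT]
      refine Finset.mem_insert_of_mem (Finset.mem_insert.mpr (Or.inl (by omega)))
    · have : M - 1 ∈ S := hst 1 (le_refl 1) (by omega)
      rw [hfrk, hT]
      refine Finset.mem_insert_of_mem (Finset.mem_insert_of_mem ?_)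
      rw [Finset.mem_erase]
      exact ⟨by omega, this⟩
  have hTmax : (frk S).max' hTne = M - 1 := by
    refine le_antisymm (Finset.max'_le _ _ _ fun x hx => ?_) (Finset.le_max' _ _ hM1mem)
    rcases hTsub x hx with rfl | h | ⟨hxS, hxM⟩
    · omega
    · omega
    · have := S.le_max' x hxS; omega
  have hTmin : ∀ x ∈ frk S, r ≤ x := by
    intro x hx
    rcases hTsub x hx with rfl | h | ⟨hxS, _⟩
    · omega
    · omega
    · have := hsmin x hxS; omega
  have hminT : (frk S).min' hTne = r :=
    le_antisymm (Finset.min'_le _ _ hrT) (Finset.le_min' _ _ _ hTmin)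
  obtain ⟨hT1, hT2, hT3, hT4⟩ := stair_spec (frk S) hTne h0T
  have hstcongr : stair (frk S) ((frk S).max' hTne) = stair (frk S) (M - 1) := by
    rw [hTmax]
  rw [hTmax] at hT3 hT4
  rw [hstcongr] at hT1 hT2
  have hmemT : ∀ x, x ∈ S → x ≠ M → x ∈ frk S := by
    intro x hx hxm
    rw [hfrk, hT]
    exact Finset.mem_insert_of_mem
      (Finset.mem_insert_of_mem (Finset.mem_erase.mpr ⟨hxm, hx⟩))
  have hmemT2 : M - r ∈ frk S := by
    rw [hfrk, hT]
    exact Finset.mem_insert_of_mem (Finset.mem_insert_self _ _)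
  have hstT_ge : r ≤ stair (frk S) (M - 1) := by
    by_contra hc
    push_neg at hc
    refine hT3 ?_
    by_cases hx : M - 1 - stair (frk S) (M - 1) = M - r
    · rw [hx]; exact hmemT2
    · have hxS : M - 1 - stair (frk S) (M - 1) ∈ S :=
        hsub _ (by omega) (by omega)
      exact hmemT _ hxS (by omega)
  have hcond : (frk S).min' hTne ≤ stair (frk S) ((frk S).max' hTne) := by
    rw [hminT, hstcongr]; exact hstT_ge
  have hback : frk (frk S) = S := by
    rw [frk, dif_pos hTne, if_pos hcond, hTmax, hminT,
      show M - 1 + 1 = M from by omega, hfrk, hT,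
      Finset.erase_insert hrIn, Finset.erase_insert hMrS', Finset.insert_erase hMS]
  refine ⟨hsum, hcard, h0T, hback, ?_⟩
  rintro (⟨m, hm⟩ | ⟨m, hm1, hm⟩)
  · -- frk S = Icc (m+1) (2m)
    have hrmem : r ∈ Finset.Icc (m + 1) (2 * m) := by rw [← hm]; exact hrT
    rw [Finset.mem_Icc] at hrmem
    have hm1' : 1 ≤ m := by omega
    -- max' = 2m
    have hmem1 : M - 1 ∈ Finset.Icc (m + 1) (2 * m) := by rw [← hm]; exact hM1mem
    rw [Finset.mem_Icc] at hmem1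
    have h2m : 2 * m ∈ frk S := by rw [hm]; exact Finset.mem_Icc.mpr ⟨by omega, le_refl _⟩
    have hle2 := Finset.le_max' _ _ h2m
    rw [hTmax] at hle2
    -- so M - 1 = 2m
    have h7 := hT4 m (by omega) (by omega)
    rw [hm, Finset.mem_Icc] at h7
    omega
  · -- frk S = Icc m (2m-1)
    have hrmem : r ∈ Finset.Icc m (2 * m - 1) := by rw [← hm]; exact hrT
    rw [Finset.mem_Icc] at hrmem
    have hmmem : m ∈ frk S := by rw [hm]; exact Finset.mem_Icc.mpr ⟨le_refl _, by omega⟩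
    have hrm := hTmin m hmmem
    -- r = m
    have hmem1 : M - 1 ∈ Finset.Icc m (2 * m - 1) := by rw [← hm]; exact hM1mem
    rw [Finset.mem_Icc] at hmem1
    have h2m : 2 * m - 1 ∈ frk S := by rw [hm]; exact Finset.mem_Icc.mpr ⟨by omega, le_refl _⟩
    have hle2 := Finset.le_max' _ _ h2m
    rw [hTmax] at hle2
    omega

lemma mem_le_sum {S : Finset ℕ} {x : ℕ} (hx : x ∈ S) : x ≤ ∑ i ∈ S, i :=
  Finset.single_le_sum (fun i _ => Nat.zero_le i) hx

lemma frk_good (S : Finset ℕ) (h0 : 0 ∉ S) (hnexc : ¬ isExc S) :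
    (∑ i ∈ frk S, i) = (∑ i ∈ S, i) ∧
      ((frk S).card + 1 = S.card ∨ (frk S).card = S.card + 1) ∧
      0 ∉ frk S ∧ frk (frk S) = S ∧ ¬ isExc (frk S) := by
  have hne : S.Nonempty := by
    rcases S.eq_empty_or_nonempty with rfl | h
    · refine absurd (Or.inl ⟨0, ?_⟩) hnexc
      rw [show 2 * 0 = 0 from rfl]
      exact (Finset.Icc_eq_empty (by omega)).symm
    · exact h
  have hs1 : 1 ≤ S.min' hne := Nat.one_le_iff_ne_zero.mpr (fun h => h0 (h ▸ S.min'_mem hne))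
  by_cases hcase : S.min' hne ≤ stair S (S.max' hne)
  · have hexc1 : S ≠ Finset.Icc (S.min' hne) (2 * S.min' hne - 1) := by
      intro h; exact hnexc (Or.inr ⟨S.min' hne, hs1, h⟩)
    obtain ⟨a, b, c, d, e⟩ := case1 S hne h0 hcase hexc1
    exact ⟨a, Or.inl b, c, d, e⟩
  · have hexc2 : S ≠ Finset.Icc (S.min' hne) (2 * S.min' hne - 2) := by
      intro h
      refine hnexc (Or.inl ⟨S.min' hne - 1, ?_⟩)
      have e1 : S.min' hne - 1 + 1 = S.min' hne := by omega
      have e2 : 2 * (S.min' hne - 1) = 2 * S.min' hne - 2 := by omega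
      rw [e1, e2]
      exact h
    obtain ⟨a, b, c, d, e⟩ := case2 S hne h0 hcase hexc2
    exact ⟨a, Or.inr b, c, d, e⟩

lemma pentagonal_coeff' (N : ℕ) :
    coeff N (∏ k ∈ Finset.Icc 1 N, (1 - X ^ k : ℚ⟦X⟧)) =
      ∑ n ∈ Finset.Icc (-(N : ℤ)) (N : ℤ),
        if n * (3 * n + 1) = 2 * N then (-1 : ℚ) ^ n else 0 := by
  classical
  rw [coeff_prod_one_sub, ← Finset.sum_filter]
  set P := ((Finset.Icc 1 N).powerset.filter (fun S => ∑ i ∈ S, i = N)) with hP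
  rw [← Finset.sum_filter_add_sum_filter_not P isExc]
  have hmemP : ∀ S, S ∈ P ↔ (S ⊆ Finset.Icc 1 N ∧ (∑ i ∈ S, i) = N) := by
    intro S
    rw [hP, Finset.mem_filter, Finset.mem_powerset]
  -- the non-exceptional part vanishes
  have hzero : ∑ S ∈ P.filter (fun S => ¬ isExc S), (-1 : ℚ) ^ S.card = 0 := by
    refine Finset.sum_involution (fun S _ => frk S) ?_ ?_ ?_ ?_
    · -- f a + f (frk a) = 0
      intro S hS
      rw [Finset.mem_filter] at hS
      have h0 : 0 ∉ S := fun h => by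
        have := ((hmemP S).mp hS.1).1 h
        rw [Finset.mem_Icc] at this
        omega
      obtain ⟨_, hcard, _, _, _⟩ := frk_good S h0 hS.2
      rcases hcard with h | h
      · rw [show S.card = (frk S).card + 1 from h.symm, pow_succ]
        ring
      · rw [h, pow_succ]
        ring
    · -- frk S ≠ S
      intro S hS hfne
      rw [Finset.mem_filter] at hS
      have h0 : 0 ∉ S := fun h => by
        have := ((hmemP S).mp hS.1).1 h
        rw [Finset.mem_Icc] at this
        omega
      obtain ⟨_, hcard, _, _, _⟩ := frk_good S h0 hS.2
      intro h
      rw [show frk S = S from h] at hcard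
      omega
    · -- frk S ∈ set
      intro S hS
      rw [Finset.mem_filter] at hS ⊢
      have hPS := (hmemP S).mp hS.1
      have h0 : 0 ∉ S := fun h => by
        have := hPS.1 h
        rw [Finset.mem_Icc] at this
        omega
      obtain ⟨hsum, _, h0T, _, hnex⟩ := frk_good S h0 hS.2
      refine ⟨(hmemP (frk S)).mpr ⟨?_, by rw [hsum, hPS.2]⟩, hnex⟩
      intro x hx
      rw [Finset.mem_Icc]
      constructor
      · rcases Nat.eq_zero_or_pos x with rfl | h
        · exact absurd hx h0T
        · exact h
      · calc x ≤ ∑ i ∈ frk S, i := mem_le_sum hx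
          _ = N := by rw [hsum, hPS.2]
    · -- involution
      intro S hS
      rw [Finset.mem_filter] at hS
      have h0 : 0 ∉ S := fun h => by
        have := ((hmemP S).mp hS.1).1 h
        rw [Finset.mem_Icc] at this
        omega
      exact (frk_good S h0 hS.2).2.2.2.1
  rw [hzero, add_zero]
  -- the exceptional part
  by_cases hex : ∃ n : ℤ, n * (3 * n + 1) = 2 * N
  · obtain ⟨n₀, hn₀⟩ := hex
    have hb := pent_bound n₀ N hn₀
    have hRHS : ∑ n ∈ Finset.Icc (-(N : ℤ)) (N : ℤ),
        (if n * (3 * n + 1) = 2 * N then (-1 : ℚ) ^ n else 0) = (-1 : ℚ) ^ n₀ := by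
      rw [Finset.sum_eq_single_of_mem n₀ (Finset.mem_Icc.mpr hb)
        (fun b _ hbne => if_neg (fun hc => hbne (pent_unique b n₀ (by rw [hc, hn₀]))))]
      rw [if_pos hn₀]
    rw [hRHS]
    by_cases hn0 : 0 ≤ n₀
    · -- n₀ = m ≥ 0, S₀ = Icc (m+1) (2m)
      set m := n₀.toNat with hm
      have hmn : (m : ℤ) = n₀ := Int.toNat_of_nonneg hn0
      have h2N : m * (3 * m + 1) = 2 * N := by
        have : ((m : ℤ)) * (3 * m + 1) = 2 * N := by rw [hmn]; exact hn₀
        exact_mod_cast this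
      have hsum₀ : (∑ i ∈ Finset.Icc (m + 1) (2 * m), i) = N := by
        have := sum_Icc_pent_plus m
        omega
      have hset : P.filter (fun S => isExc S) = {Finset.Icc (m + 1) (2 * m)} := by
        ext S
        rw [Finset.mem_filter, Finset.mem_singleton, hmemP]
        constructor
        · rintro ⟨⟨hsub', hsum'⟩, ⟨m', hm'⟩ | ⟨m', hm'1, hm'⟩⟩
          · have hNm : m' * (3 * m' + 1) = 2 * N := by
              have := sum_Icc_pent_plus m'
              rw [hm'] at hsum'
              omega
            have : (m' : ℤ) = n₀ := by
              refine pent_unique _ _ ?_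
              rw [hn₀]
              exact_mod_cast hNm
            have : m' = m := by omega
            rw [hm', this]
          · have hNm : m' * (3 * m' - 1) = 2 * N := by
              have := sum_Icc_pent_minus m' hm'1
              rw [hm'] at hsum'
              omega
            have hcast : ((m' * (3 * m' - 1) : ℕ) : ℤ) = 2 * N := by exact_mod_cast hNm
            rw [Nat.cast_mul, Nat.cast_sub (by omega : 1 ≤ 3 * m')] at hcast
            push_cast at hcast
            have : (-(m' : ℤ)) = n₀ := by
              refine pent_unique _ _ ?_
              rw [hn₀]
              linear_combination hcast
            omega
        · rintro rfl
          refine ⟨⟨?_, hsum₀⟩, Or.inl ⟨m, rfl⟩⟩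
          intro x hx
          have hx' := Finset.mem_Icc.mp hx
          rw [Finset.mem_Icc]
          exact ⟨by omega, by calc x ≤ _ := mem_le_sum hx
            _ = N := hsum₀⟩
      rw [hset, Finset.sum_singleton, Nat.card_Icc]
      rw [show 2 * m + 1 - (m + 1) = m from by omega]
      rw [← hmn, zpow_natCast]
    · -- n₀ = -m, m ≥ 1, S₀ = Icc m (2m-1)
      push_neg at hn0
      set m := (-n₀).toNat with hm
      have hmn : (m : ℤ) = -n₀ := Int.toNat_of_nonneg (by omega)
      have hm1 : 1 ≤ m := by omega
      have h2N : m * (3 * m - 1) = 2 * N := by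
        have hZ : ((m : ℤ)) * (3 * m - 1) = 2 * N := by
          rw [hmn]
          linear_combination hn₀
        have : ((m * (3 * m - 1) : ℕ) : ℤ) = 2 * N := by
          rw [Nat.cast_mul, Nat.cast_sub (by omega : 1 ≤ 3 * m)]
          push_cast
          push_cast at hZ
          linarith
        exact_mod_cast this
      have hsum₀ : (∑ i ∈ Finset.Icc m (2 * m - 1), i) = N := by
        have := sum_Icc_pent_minus m hm1
        omega
      have hset : P.filter (fun S => isExc S) = {Finset.Icc m (2 * m - 1)} := by
        ext S
        rw [Finset.mem_filter, Finset.mem_singleton, hmemP]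
        constructor
        · rintro ⟨⟨hsub', hsum'⟩, ⟨m', hm'⟩ | ⟨m', hm'1, hm'⟩⟩
          · have hNm : m' * (3 * m' + 1) = 2 * N := by
              have := sum_Icc_pent_plus m'
              rw [hm'] at hsum'
              omega
            have : (m' : ℤ) = n₀ := by
              refine pent_unique _ _ ?_
              rw [hn₀]
              exact_mod_cast hNm
            omega
          · have hNm : m' * (3 * m' - 1) = 2 * N := by
              have := sum_Icc_pent_minus m' hm'1
              rw [hm'] at hsum'
              omega
            have hcast : ((m' * (3 * m' - 1) : ℕ) : ℤ) = 2 * N := by exact_mod_cast hNm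
            rw [Nat.cast_mul, Nat.cast_sub (by omega : 1 ≤ 3 * m')] at hcast
            push_cast at hcast
            have : (-(m' : ℤ)) = n₀ := by
              refine pent_unique _ _ ?_
              rw [hn₀]
              linear_combination hcast
            have : m' = m := by omega
            rw [hm', this]
        · rintro rfl
          refine ⟨⟨?_, hsum₀⟩, Or.inr ⟨m, hm1, rfl⟩⟩
          intro x hx
          have hx' := Finset.mem_Icc.mp hx
          rw [Finset.mem_Icc]
          exact ⟨by omega, by calc x ≤ _ := mem_le_sum hx
            _ = N := hsum₀⟩
      rw [hset, Finset.sum_singleton, Nat.card_Icc]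
      rw [show 2 * m - 1 + 1 - m = m from by omega]
      rw [show n₀ = -(m : ℤ) from by omega, zpow_neg, zpow_natCast]
      rw [show ((-1 : ℚ) ^ m)⁻¹ = (-1) ^ m from by
        rcases neg_one_pow_eq_one_iff_even (R := ℚ) (by norm_num) |>.symm with _
        rcases Nat.even_or_odd m with h | h
        · rw [h.neg_one_pow]; norm_num
        · rw [h.neg_one_pow]; norm_num]
  · -- no pentagonal representation
    have hRHS : ∑ n ∈ Finset.Icc (-(N : ℤ)) (N : ℤ),
        (if n * (3 * n + 1) = 2 * N then (-1 : ℚ) ^ n else 0) = 0 :=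
      Finset.sum_eq_zero fun n _ => if_neg (fun hc => hex ⟨n, hc⟩)
    rw [hRHS]
    have hset : P.filter (fun S => isExc S) = ∅ := by
      rw [Finset.eq_empty_iff_forall_notMem]
      intro S hS
      rw [Finset.mem_filter, hmemP] at hS
      obtain ⟨⟨hsub', hsum'⟩, hexc⟩ := hS
      rcases hexc with ⟨m', hm'⟩ | ⟨m', hm'1, hm'⟩
      · have hNm : m' * (3 * m' + 1) = 2 * N := by
          have := sum_Icc_pent_plus m'
          rw [hm'] at hsum'
          omega
        exact hex ⟨m', by exact_mod_cast hNm⟩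
      · have hNm : m' * (3 * m' - 1) = 2 * N := by
          have := sum_Icc_pent_minus m' hm'1
          rw [hm'] at hsum'
          omega
        have hcast : ((m' * (3 * m' - 1) : ℕ) : ℤ) = 2 * N := by exact_mod_cast hNm
        rw [Nat.cast_mul, Nat.cast_sub (by omega : 1 ≤ 3 * m')] at hcast
        push_cast at hcast
        exact hex ⟨-(m' : ℤ), by linear_combination hcast⟩
    rw [hset, Finset.sum_empty]

-- ### Dq basics

lemma coeff_Dq (F : ℚ⟦X⟧) (n : ℕ) : coeff n (Dq F) = (n : ℚ) * coeff n F := by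
  simp [Dq]

lemma Dq_add (F G : ℚ⟦X⟧) : Dq (F + G) = Dq F + Dq G := by
  ext n; simp [coeff_Dq, mul_add]

lemma Dq_smul (c : ℚ) (F : ℚ⟦X⟧) : Dq (c • F) = c • Dq F := by
  ext n; simp [coeff_Dq]; ring

lemma Dq_mul (F G : ℚ⟦X⟧) : Dq (F * G) = Dq F * G + F * Dq G := by
  ext n
  simp only [coeff_Dq, map_add, coeff_mul, mul_sum, ← sum_add_distrib]
  refine Finset.sum_congr rfl fun p hp => ?_
  rw [Finset.HasAntidiagonal.mem_antidiagonal] at hp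
  rw [← hp]
  push_cast
  ring

lemma Dq_one : Dq 1 = 0 := by
  ext n
  simp [coeff_Dq, coeff_one]

lemma Dq_X_pow (k : ℕ) : Dq ((X : ℚ⟦X⟧) ^ k) = (k : ℚ) • X ^ k := by
  ext n
  simp [coeff_Dq, coeff_X_pow]
  split <;> simp_all

lemma Dq_sub (F G : ℚ⟦X⟧) : Dq (F - G) = Dq F - Dq G := by
  ext n; simp [coeff_Dq, mul_sub]

lemma Dq_prod {ι : Type*} [DecidableEq ι] (s : Finset ι) (f : ι → ℚ⟦X⟧) :
    Dq (∏ i ∈ s, f i) = ∑ i ∈ s, Dq (f i) * ∏ j ∈ s.erase i, f j := by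
  induction s using Finset.induction_on with
  | empty => simp [Dq_one]
  | insert a s ha ih =>
    rw [Finset.prod_insert ha, Dq_mul, ih, Finset.sum_insert ha, Finset.erase_insert ha]
    rw [Finset.mul_sum]
    congr 1
    refine Finset.sum_congr rfl fun i hi => ?_
    rw [Finset.erase_insert_of_ne (by rintro rfl; exact ha hi)]
    rw [Finset.prod_insert (by simp [ha, Finset.mem_erase])]
    ring


-- geometric series for X^k
def geom (k : ℕ) : ℚ⟦X⟧ := PowerSeries.mk fun m => if k ∣ m then 1 else 0

lemma one_sub_X_pow_mul_geom {k : ℕ} (hk : 1 ≤ k) : (1 - X ^ k : ℚ⟦X⟧) * geom k = 1 := by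
  ext m
  rw [sub_mul, one_mul, map_sub]
  rw [PowerSeries.coeff_X_pow_mul']
  simp only [geom, coeff_mk, coeff_one]
  rcases Nat.eq_zero_or_pos m with rfl | hm
  · rw [if_pos (dvd_zero k), if_neg (by omega : ¬ k ≤ 0), if_pos rfl]; ring
  · have hmne : ¬ m = 0 := by omega
    rw [if_neg hmne]
    by_cases hkm : k ≤ m
    · rw [if_pos hkm]
      have : k ∣ m ↔ k ∣ m - k := by
        constructor
        · intro h; exact (Nat.dvd_sub h dvd_rfl)
        · intro h; have := Nat.dvd_add h dvd_rfl; rwa [Nat.sub_add_cancel hkm] at this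
      by_cases hd : k ∣ m
      · rw [if_pos hd, if_pos (this.mp hd)]; ring
      · rw [if_neg hd, if_neg (fun hc => hd (this.mpr hc))]; ring
    · rw [if_neg hkm]
      have : ¬ k ∣ m := fun hd => hkm (Nat.le_of_dvd hm hd)
      rw [if_neg this]; ring

lemma inv_one_sub_X_pow {k : ℕ} (hk : 1 ≤ k) : (1 - X ^ k : ℚ⟦X⟧)⁻¹ = geom k := by
  rw [PowerSeries.inv_eq_iff_mul_eq_one]
  · rw [mul_comm]; exact one_sub_X_pow_mul_geom hk
  · have : constantCoeff (1 - X ^ k : ℚ⟦X⟧) = 1 := by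
      simp [map_sub, map_pow, constantCoeff_X, zero_pow (by omega : k ≠ 0)]
    rw [this]; norm_num

lemma coeff_X_pow_mul_geom {k : ℕ} (hk : 1 ≤ k) (i : ℕ) :
    coeff i ((X : ℚ⟦X⟧) ^ k * geom k) = if k ∣ i ∧ i ≠ 0 then 1 else 0 := by
  rw [PowerSeries.coeff_X_pow_mul']
  simp only [geom, coeff_mk]
  by_cases hki : k ≤ i
  · rw [if_pos hki]
    have hiff : k ∣ i - k ↔ k ∣ i ∧ i ≠ 0 := by
      constructor
      · intro h
        have h2 := Nat.dvd_add h dvd_rfl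
        rw [Nat.sub_add_cancel hki] at h2
        exact ⟨h2, by omega⟩
      · intro ⟨h, _⟩; exact Nat.dvd_sub h dvd_rfl
    by_cases hd : k ∣ i - k
    · rw [if_pos hd, if_pos (hiff.mp hd)]
    · rw [if_neg hd, if_neg (fun hc => hd (hiff.mpr hc))]
  · rw [if_neg hki]
    rw [if_neg]
    rintro ⟨hd, hi⟩
    exact hki (Nat.le_of_dvd (by omega) hd)

def Tser (N : ℕ) : ℚ⟦X⟧ := ∑ k ∈ Finset.Icc 1 N, (k : ℚ) • ((X : ℚ⟦X⟧) ^ k * geom k)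

lemma coeff_Tser {i N : ℕ} (hiN : i ≤ N) :
    coeff i (Tser N) = if i = 0 then 0 else ∑ d ∈ i.divisors, (d : ℚ) := by
  rw [Tser, map_sum]
  by_cases hi : i = 0
  · subst hi
    rw [if_pos rfl]
    refine Finset.sum_eq_zero fun k hk => ?_
    rw [Finset.mem_Icc] at hk
    rw [map_smul, coeff_X_pow_mul_geom hk.1]
    simp
  · rw [if_neg hi]
    have : ∀ k ∈ Finset.Icc 1 N, coeff i ((k : ℚ) • ((X : ℚ⟦X⟧) ^ k * geom k)) =
        if k ∣ i then (k : ℚ) else 0 := by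
      intro k hk
      rw [Finset.mem_Icc] at hk
      rw [map_smul, coeff_X_pow_mul_geom hk.1, smul_eq_mul]
      by_cases hd : k ∣ i
      · rw [if_pos ⟨hd, hi⟩, if_pos hd, mul_one]
      · rw [if_neg (fun h => hd h.1), if_neg hd, mul_zero]
    rw [Finset.sum_congr rfl this, ← Finset.sum_filter]
    have hset : (Finset.Icc 1 N).filter (fun k => k ∣ i) = i.divisors := by
      ext k
      simp only [Finset.mem_filter, Finset.mem_Icc, Nat.mem_divisors]
      constructor
      · rintro ⟨_, hd⟩; exact ⟨hd, hi⟩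
      · rintro ⟨hd, _⟩
        have hk0 : k ≠ 0 := by rintro rfl; exact hi (Nat.eq_zero_of_zero_dvd hd)
        exact ⟨⟨by omega, le_trans (Nat.le_of_dvd (by omega) hd) hiN⟩, hd⟩
    rw [hset]

lemma Dq_eulerPoly (N : ℕ) :
    Dq (∏ k ∈ Finset.Icc 1 N, (1 - X ^ k : ℚ⟦X⟧)) =
      -(Tser N * ∏ k ∈ Finset.Icc 1 N, (1 - X ^ k : ℚ⟦X⟧)) := by
  rw [Dq_prod, Tser, Finset.sum_mul, ← Finset.sum_neg_distrib]
  refine Finset.sum_congr rfl fun k hk => ?_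
  rw [Finset.mem_Icc] at hk
  rw [Dq_sub, Dq_one, Dq_X_pow, zero_sub]
  rw [← Finset.mul_prod_erase _ _ (Finset.mem_Icc.mpr hk)]
  have hgi : (geom k) * (1 - X ^ k : ℚ⟦X⟧) = 1 := by
    rw [mul_comm]; exact one_sub_X_pow_mul_geom hk.1
  rw [neg_mul, smul_mul_assoc]
  rw [smul_mul_assoc]
  congr 2
  rw [show ((X : ℚ⟦X⟧) ^ k * geom k * ((1 - X ^ k) * ∏ x ∈ (Icc 1 N).erase k, (1 - X ^ x)))
      = (geom k * (1 - X ^ k)) * (X ^ k * ∏ x ∈ (Icc 1 N).erase k, (1 - X ^ x)) from by ring,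
    hgi, one_mul]


lemma dvd_one_sub_prod {ι : Type*} (d : ℚ⟦X⟧) (s : Finset ι) (f : ι → ℚ⟦X⟧)
    (h : ∀ i ∈ s, d ∣ (1 - f i)) : d ∣ (1 - ∏ i ∈ s, f i) := by
  classical
  revert h
  refine Finset.induction_on s ?_ ?_
  · intro _; simp
  · intro a s ha ih h
    rw [Finset.prod_insert ha]
    have key : (1 : ℚ⟦X⟧) - f a * ∏ i ∈ s, f i
        = (1 - f a) * ∏ i ∈ s, f i + (1 - ∏ i ∈ s, f i) := by ring
    rw [key]
    exact dvd_add (Dvd.dvd.mul_right (h a (Finset.mem_insert_self a s)) _)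
      (ih fun i hi => h i (Finset.mem_insert_of_mem hi))

lemma constantCoeff_eulerPoly (M : ℕ) :
    constantCoeff (∏ k ∈ Finset.Icc 1 M, (1 - X ^ k : ℚ⟦X⟧)) = 1 := by
  rw [map_prod]
  refine Finset.prod_eq_one fun k hk => ?_
  rw [Finset.mem_Icc] at hk
  simp [map_sub, map_pow, constantCoeff_X, zero_pow (by omega : k ≠ 0)]

lemma coeff_euler_trunc {m N : ℕ} (h : m ≤ N) :
    coeff m (∏ k ∈ Finset.Icc 1 N, (1 - X ^ k : ℚ⟦X⟧)) = coeff m eulerProd := by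
  rw [eulerProd, coeff_mk]
  rcases Nat.eq_zero_or_pos m with rfl | hm
  · simp only [coeff_zero_eq_constantCoeff, constantCoeff_eulerPoly]
  · have hsplit : Finset.Icc 1 N = Finset.Icc 1 m ∪ Finset.Ioc m N := by
      ext x
      simp only [Finset.mem_Icc, Finset.mem_Ioc, Finset.mem_union]
      omega
    have hdisj : Disjoint (Finset.Icc 1 m) (Finset.Ioc m N) := by
      rw [Finset.disjoint_left]
      intro x hx hx2
      rw [Finset.mem_Icc] at hx; rw [Finset.mem_Ioc] at hx2
      omega
    rw [hsplit, Finset.prod_union hdisj]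
    set P := ∏ k ∈ Finset.Icc 1 m, (1 - X ^ k : ℚ⟦X⟧) with hP
    set Q := ∏ k ∈ Finset.Ioc m N, (1 - X ^ k : ℚ⟦X⟧) with hQ
    have hdvd : (X : ℚ⟦X⟧) ^ (m + 1) ∣ (1 - Q) := by
      refine dvd_one_sub_prod _ _ _ fun k hk => ?_
      rw [Finset.mem_Ioc] at hk
      rw [show (1 : ℚ⟦X⟧) - (1 - X ^ k) = X ^ k from by ring]
      exact pow_dvd_pow _ (by omega)
    have key : P * Q = P + -(P * (1 - Q)) := by ring
    rw [key, map_add, map_neg]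
    have h0 : coeff m (P * (1 - Q)) = 0 := by
      have hdvd2 : (X : ℚ⟦X⟧) ^ (m + 1) ∣ P * (1 - Q) := Dvd.dvd.mul_left hdvd P
      exact (PowerSeries.X_pow_dvd_iff.mp hdvd2) m (by omega)
    rw [h0]; ring

lemma coeff_mul_congr {F F' G G' : ℚ⟦X⟧} {N : ℕ}
    (hF : ∀ i ≤ N, coeff i F = coeff i F') (hG : ∀ j ≤ N, coeff j G = coeff j G') :
    coeff N (F * G) = coeff N (F' * G') := by
  rw [coeff_mul, coeff_mul]
  refine Finset.sum_congr rfl fun p hp => ?_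
  rw [Finset.HasAntidiagonal.mem_antidiagonal] at hp
  rw [hF p.1 (by omega), hG p.2 (by omega)]

lemma coeff_E2_trunc {i N : ℕ} (h : i ≤ N) :
    coeff i E2 = coeff i (1 - (24 : ℚ) • Tser N) := by
  rw [map_sub, map_smul, coeff_Tser h, coeff_one, E2, coeff_mk]
  by_cases hi : i = 0
  · simp [hi]
  · simp only [if_neg hi, smul_eq_mul]
    ring

-- ### main statements to be proven later

lemma euler_eq_pentagonal : eulerProd = pentagonalSum 0 := by
  ext N
  simp only [eulerProd, pentagonalSum, coeff_mk, pentagonal_coeff' N]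
  refine Finset.sum_congr rfl fun n _ => ?_
  split <;> simp

lemma E2_mul_euler : E2 * eulerProd = eulerProd + (24 : ℚ) • Dq eulerProd := by
  ext N
  rw [map_add, map_smul, coeff_Dq, smul_eq_mul]
  have h1 : coeff N (E2 * eulerProd) =
      coeff N ((1 - (24 : ℚ) • Tser N) * ∏ k ∈ Finset.Icc 1 N, (1 - X ^ k : ℚ⟦X⟧)) :=
    coeff_mul_congr (fun i hi => coeff_E2_trunc hi) (fun j hj => (coeff_euler_trunc hj).symm)
  rw [h1, sub_mul, one_mul, map_sub, smul_mul_assoc, map_smul, smul_eq_mul]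
  have h2 : coeff N (Tser N * ∏ k ∈ Finset.Icc 1 N, (1 - X ^ k : ℚ⟦X⟧)) =
      -((N : ℚ) * coeff N (∏ k ∈ Finset.Icc 1 N, (1 - X ^ k : ℚ⟦X⟧))) := by
    have hq := congrArg (coeff N) (Dq_eulerPoly N)
    rw [coeff_Dq, map_neg] at hq
    linarith
  rw [h2]
  have h3 : coeff N eulerProd = coeff N (∏ k ∈ Finset.Icc 1 N, (1 - X ^ k : ℚ⟦X⟧)) := by
    rw [eulerProd, coeff_mk]
  rw [h3]
  ring

lemma pentagonal_rec (t : ℕ) :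
    pentagonalSum (t + 1) = pentagonalSum t + (24 : ℚ) • Dq (pentagonalSum t) := by
  ext N
  simp only [pentagonalSum, map_add, coeff_mk, map_smul, coeff_Dq, smul_eq_mul, mul_sum,
    ← sum_add_distrib]
  refine Finset.sum_congr rfl fun n _ => ?_
  by_cases hc : n * (3 * n + 1) = 2 * (N : ℤ)
  · simp only [if_pos hc]
    have h2 : ((6 * n + 1 : ℤ) : ℚ) ^ 2 = 1 + 24 * (N : ℚ) := by
      have : ((n : ℚ)) * (3 * n + 1) = 2 * N := by exact_mod_cast hc
      push_cast
      linear_combination 12 * this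
    have : 2 * (t + 1) = 2 * t + 2 := by ring
    rw [this, pow_add, h2]
    ring
  · simp [if_neg hc]


theorem ramanujan_V_eta_quotient (t : ℕ) :
    ((24 : ℚ) ^ t) • (Fram t * eulerProd) = pentagonalSum t := by
  induction t with
  | zero => simpa [Fram] using euler_eq_pentagonal
  | succ t ih =>
    rw [pentagonal_rec, ← ih]
    show (24 : ℚ) ^ (t + 1) • (((1 / 24 : ℚ) • (E2 * Fram t) + Dq (Fram t)) * eulerProd) = _
    rw [Dq_smul, Dq_mul]
    have hB := E2_mul_euler
    simp only [smul_eq_C_mul, map_pow]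
    rw [smul_eq_C_mul] at hB
    have hC : (C (R := ℚ)) (1 / 24 : ℚ) * (C (R := ℚ)) (24 : ℚ) = 1 := by
      rw [← map_mul]; norm_num
    linear_combination (((C (R := ℚ)) (24 : ℚ)) ^ t * Fram t) * hB +
      (((C (R := ℚ)) (24 : ℚ)) ^ t * E2 * Fram t * eulerProd) * hC
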